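/- Fix N ∈ ℕ, s, u > 0, 0 < ν₀, ν₁ < 1 with ν₀ + ν₁ = 1. Suppose sequences (aₙ)₀≤ₙ≤N and (bₙ)₀≤ₙ≤N₊₁ satisfy a₀ = 1, a_N = 0, b₀ = 1, b_{N+1} = 0, the recursion ((n+1)/N + s(N−n)/N + u)·aₙ = ((n+1)/N + uν₁)·aₙ₊₁ + s((N−n)/N)·aₙ₋₁ for 0 < n < N, and ((n−1)/N + s(N−n)/N + u)·bₙ = ((n−1)/N + uν₁)·bₙ₋₁ + s((N−n)/N)·bₙ₊₁ for 0 < n ≤ N. Then for every n with 0 < n ≤ N: uν₀·aₙ₋₁·bₙ + ∑_{i=n+1}^{N} (1/N)(a_{i−1}−a_i)(b_{i−1}−b_i) = uν₁·(aₙ₋₁−aₙ)(bₙ₋₁−bₙ) + ((n−1)/N)(aₙ₋₁−aₙ)(bₙ₋₁−bₙ). -/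

import Mathlib

theorem stmt6 (N : ℕ) (hN : 0 < N) (s u ν₀ ν₁ : ℝ) (hs : 0 < s) (hu : 0 < u)
    (hν₀ : 0 < ν₀) (hν₀1 : ν₀ < 1) (hν₁ : 0 < ν₁) (hν₁1 : ν₁ < 1) (hν : ν₀ + ν₁ = 1)
    (a b : ℕ → ℝ) (ha0 : a 0 = 1) (haN : a N = 0) (haN1 : a (N+1) = 0)
    (hb0 : b 0 = 1) (hbN1 : b (N+1) = 0)
    (hreca : ∀ n : ℕ, 0 < n → n < N →
      (((n:ℝ)+1)/N + s*((N:ℝ)-n)/N + u) * a n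
        = (((n:ℝ)+1)/N + u*ν₁) * a (n+1) + s*(((N:ℝ)-n)/N) * a (n-1))
    (hrecb : ∀ n : ℕ, 0 < n → n ≤ N →
      (((n:ℝ)-1)/N + s*((N:ℝ)-n)/N + u) * b n
        = (((n:ℝ)-1)/N + u*ν₁) * b (n-1) + s*(((N:ℝ)-n)/N) * b (n+1)) :
    ∀ n : ℕ, 0 < n → n ≤ N →
      u*ν₀*a (n-1)*b n
          + ∑ i ∈ Finset.Icc (n+1) N, (1/(N:ℝ))*(a (i-1) - a i)*(b (i-1) - b i)
        = u*ν₁*(a (n-1) - a n)*(b (n-1) - b n)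
          + (((n:ℝ)-1)/N)*(a (n-1) - a n)*(b (n-1) - b n) := by
  have hNR : (N:ℝ) ≠ 0 := Nat.cast_ne_zero.mpr hN.ne'
  -- prove by downward induction: induct on k = N - n
  suffices h : ∀ k n : ℕ, n + k = N → 0 < n →
      u*ν₀*a (n-1)*b n
          + ∑ i ∈ Finset.Icc (n+1) N, (1/(N:ℝ))*(a (i-1) - a i)*(b (i-1) - b i)
        = u*ν₁*(a (n-1) - a n)*(b (n-1) - b n)
          + (((n:ℝ)-1)/N)*(a (n-1) - a n)*(b (n-1) - b n) by
    intro n hn hnN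
    exact h (N - n) n (by omega) hn
  intro k
  induction k with
  | zero =>
      intro n hnN hn
      subst hnN
      simp only [Nat.add_zero] at *
      rw [show Finset.Icc (n+1) n = ∅ by simp, Finset.sum_empty]
      have hb := hrecb n hn le_rfl
      have hnn : ((n:ℝ) - n) = 0 := by ring
      rw [show ((n:ℝ) - n) = 0 by ring] at hb
      rw [haN]
      linear_combination a (n-1) * hb + u * a (n-1) * b n * hν
  | succ k ih =>
      intro n hnN hn
      have hnN' : n < N := by omega
      have hsucc : 0 < n + 1 := by omega
      have IH := ih (n+1) (by omega) hsucc
      simp only [Nat.add_sub_cancel] at IH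
      have hcast : ((n+1 : ℕ) : ℝ) = (n:ℝ) + 1 := by push_cast; ring
      rw [hcast] at IH
      have hsplit : ∑ i ∈ Finset.Icc (n+1) N, (1/(N:ℝ))*(a (i-1) - a i)*(b (i-1) - b i)
          = (1/(N:ℝ))*(a n - a (n+1))*(b n - b (n+1))
            + ∑ i ∈ Finset.Icc (n+1+1) N, (1/(N:ℝ))*(a (i-1) - a i)*(b (i-1) - b i) := by
        rw [Finset.Icc_eq_cons_Ioc (by omega : n+1 ≤ N), Finset.sum_cons, ← Finset.Icc_add_one_left_eq_Ioc]
        simp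
      rw [hsplit]
      have ha' := hreca n hn hnN'
      have hb' := hrecb n hn hnN'.le
      have key : u*ν₀*a (n-1)*b n + (1/(N:ℝ))*(a n - a (n+1))*(b n - b (n+1))
            + (u*ν₁*(a n - a (n+1))*(b n - b (n+1))
              + (((n:ℝ)+1-1)/N)*(a n - a (n+1))*(b n - b (n+1)))
            - u*ν₀*a n*b (n+1)
          = u*ν₁*(a (n-1) - a n)*(b (n-1) - b n)
            + (((n:ℝ)-1)/N)*(a (n-1) - a n)*(b (n-1) - b n) := by
        linear_combination (b n - b (n+1)) * ha' + (a (n-1) - a n) * hb' + u*(a (n-1)*b n - a n*b (n+1)) * hν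
      linarith [IH, key]
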